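/- Let ρ ≻ 0 be a full-rank density operator and T a trace-non-increasing completely positive map (T†[I] ⪯ I) that is ρ-detailed balanced. Define K := sqrt( ρ^{1/2} (I - T†[I]) ρ^{1/2} ) · ρ^{-1/2}. Then (i) K† K = I - T†[I], so Q[X] := T[X] + K X K† is a quantum channel (CPTP), and (ii) K ρ^{1/2} is positive semidefinite (in particular self-adjoint), so the map X ↦ K X K† is ρ-detailed balanced, hence Q is ρ-detailed balanced. -/

import Mathlib

open Matrix
open scoped ComplexOrder
open scoped MatrixOrder

/-- Prescription for the rejection part, discrete time. Let `ρ ≻ 0` be a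
full-rank density matrix (with square root `ρhalf = ρ^{1/2}`, quarter power
`ρ4 = ρ^{1/4}` and their inverses), and let `T` be a trace-non-increasing
completely positive map (`T†[I] ⪯ I`) which is `ρ`-detailed balanced. With
`K := sqrt(ρ^{1/2} (I - T†[I]) ρ^{1/2}) ρ^{-1/2}` we have: (i) `Kᴴ K = I - T†[I]`,
so `Q[X] = T[X] + K X Kᴴ` is trace preserving (and CP); and (ii) `K ρ^{1/2}` is
positive semidefinite (in particular self-adjoint), and `Q` is `ρ`-detailed
balanced. -/
theorem discrete_reject_term (d : ℕ)
    (ρ : Matrix (Fin d) (Fin d) ℂ) (hρ : ρ.PosDef) (hρtr : ρ.trace = 1)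
    (T Tadj : Matrix (Fin d) (Fin d) ℂ →ₗ[ℂ] Matrix (Fin d) (Fin d) ℂ)
    (hadj : ∀ X Y, (Yᴴ * T X).trace = ((Tadj Y)ᴴ * X).trace)
    (hCP : ∃ (m : ℕ) (A : Fin m → Matrix (Fin d) (Fin d) ℂ),
      ∀ X, T X = ∑ a, A a * X * (A a)ᴴ)
    (hTNI : (1 - Tadj 1).PosSemidef)
    (ρhalf ρhalfinv ρ4 ρ4inv : Matrix (Fin d) (Fin d) ℂ)
    (hρhalf : ρhalf.PosDef) (hhalf : ρhalf * ρhalf = ρ)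
    (hhalf1 : ρhalf * ρhalfinv = 1) (hhalf2 : ρhalfinv * ρhalf = 1)
    (hρ4 : ρ4.PosDef) (h4 : ρ4 * ρ4 = ρhalf)
    (h41 : ρ4 * ρ4inv = 1) (h42 : ρ4inv * ρ4 = 1)
    (hDBT : ∀ X, ρ4inv * T (ρ4 * X * ρ4) * ρ4inv =
      ρ4 * Tadj (ρ4inv * X * ρ4inv) * ρ4)
    (hP : (ρhalf * (1 - Tadj 1) * ρhalf).PosSemidef)
    (K : Matrix (Fin d) (Fin d) ℂ) (hK : K = CFC.sqrt (ρhalf * (1 - Tadj 1) * ρhalf) * ρhalfinv) :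
    Kᴴ * K = 1 - Tadj 1 ∧
    (∀ X, (T X + K * X * Kᴴ).trace = X.trace) ∧
    (K * ρhalf).PosSemidef ∧
    (∀ X, ρ4inv * (T (ρ4 * X * ρ4) + K * (ρ4 * X * ρ4) * Kᴴ) * ρ4inv =
      ρ4 * (Tadj (ρ4inv * X * ρ4inv) + Kᴴ * (ρ4inv * X * ρ4inv) * K) * ρ4) := by
  set S := CFC.sqrt (ρhalf * (1 - Tadj 1) * ρhalf) with hS
  have hSherm : Sᴴ = S := (Matrix.nonneg_iff_posSemidef.mp (CFC.sqrt_nonneg _)).isHermitian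
  have hSS : S * S = ρhalf * (1 - Tadj 1) * ρhalf := CFC.sqrt_mul_sqrt_self _ (Matrix.nonneg_iff_posSemidef.mpr hP)
  have hinvherm : ρhalfinvᴴ = ρhalfinv := by
    have h1 : ρhalfinvᴴ * ρhalf = 1 := by
      have := congrArg conjTranspose hhalf1
      rwa [conjTranspose_mul, hρhalf.isHermitian.eq, conjTranspose_one] at this
    calc ρhalfinvᴴ = ρhalfinvᴴ * ρhalf * ρhalfinv := by
          rw [mul_assoc, hhalf1, mul_one]
      _ = ρhalfinv := by rw [h1, one_mul]
  have hKH : Kᴴ = ρhalfinv * S := by rw [hK, conjTranspose_mul, hinvherm, hSherm]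
  have hi : Kᴴ * K = 1 - Tadj 1 := by
    rw [hKH, hK]
    calc ρhalfinv * S * (S * ρhalfinv)
        = ρhalfinv * (S * S) * ρhalfinv := by noncomm_ring
      _ = ρhalfinv * ρhalf * (1 - Tadj 1) * (ρhalf * ρhalfinv) := by
          rw [hSS]; noncomm_ring
      _ = 1 - Tadj 1 := by rw [hhalf1, hhalf2, one_mul, mul_one]
  have hTadjherm : (Tadj 1)ᴴ = Tadj 1 := by
    have := hTNI.isHermitian.eq
    rw [conjTranspose_sub, conjTranspose_one] at this
    have h := sub_right_injective this
    exact h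
  refine ⟨hi, ?_, ?_, ?_⟩
  · intro X
    have h1 : (T X).trace = (Tadj 1 * X).trace := by
      have := hadj X 1
      rwa [conjTranspose_one, one_mul, hTadjherm] at this
    have h2 : (K * X * Kᴴ).trace = ((1 - Tadj 1) * X).trace := by
      rw [← hi, Matrix.trace_mul_cycle, mul_assoc]
    rw [trace_add, h1, h2, ← trace_add, ← add_mul]
    simp
  · rw [hK, mul_assoc, hhalf2, mul_one]
    exact Matrix.nonneg_iff_posSemidef.mp (CFC.sqrt_nonneg _)
  · intro X
    have hhinv : ρhalfinv = ρ4inv * ρ4inv := by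
      calc ρhalfinv = ρhalfinv * (ρ4 * ρ4 * (ρ4inv * ρ4inv)) := by
            rw [show ρ4 * ρ4 * (ρ4inv * ρ4inv) = ρ4 * (ρ4 * ρ4inv) * ρ4inv by
              noncomm_ring, h41, mul_one, h41, mul_one]
        _ = ρ4inv * ρ4inv := by rw [h4, ← mul_assoc, hhalf2, one_mul]
    have e1 : ρ4inv * K * ρ4 = ρ4inv * S * ρ4inv := by
      rw [hK, hhinv]
      calc ρ4inv * (S * (ρ4inv * ρ4inv)) * ρ4 =
          ρ4inv * S * ρ4inv * (ρ4inv * ρ4) := by noncomm_ring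
        _ = ρ4inv * S * ρ4inv := by rw [h42, mul_one]
    have e2 : ρ4 * Kᴴ * ρ4inv = ρ4inv * S * ρ4inv := by
      rw [hKH, hhinv]
      calc ρ4 * (ρ4inv * ρ4inv * S) * ρ4inv =
          (ρ4 * ρ4inv) * (ρ4inv * S * ρ4inv) := by noncomm_ring
        _ = ρ4inv * S * ρ4inv := by rw [h41, one_mul]
    have key : ρ4inv * (K * (ρ4 * X * ρ4) * Kᴴ) * ρ4inv =
        ρ4 * (Kᴴ * (ρ4inv * X * ρ4inv) * K) * ρ4 := by
      calc ρ4inv * (K * (ρ4 * X * ρ4) * Kᴴ) * ρ4inv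
          = (ρ4inv * K * ρ4) * X * (ρ4 * Kᴴ * ρ4inv) := by noncomm_ring
        _ = (ρ4 * Kᴴ * ρ4inv) * X * (ρ4inv * K * ρ4) := by rw [e1, e2]
        _ = ρ4 * (Kᴴ * (ρ4inv * X * ρ4inv) * K) * ρ4 := by noncomm_ring
    calc ρ4inv * (T (ρ4 * X * ρ4) + K * (ρ4 * X * ρ4) * Kᴴ) * ρ4inv
        = ρ4inv * T (ρ4 * X * ρ4) * ρ4inv
          + ρ4inv * (K * (ρ4 * X * ρ4) * Kᴴ) * ρ4inv := by noncomm_ring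
      _ = ρ4 * Tadj (ρ4inv * X * ρ4inv) * ρ4
          + ρ4 * (Kᴴ * (ρ4inv * X * ρ4inv) * K) * ρ4 := by rw [hDBT, key]
      _ = ρ4 * (Tadj (ρ4inv * X * ρ4inv) + Kᴴ * (ρ4inv * X * ρ4inv) * K) * ρ4 := by
          noncomm_ring
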